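/- Let α ∈ (0,1) and let ℓ be slowly varying at 0. Then there exists λ₀ ∈ (0,1) such that for all λ ∈ (0, λ₀) and all δ ∈ (0, 1/2]: ∫_1^∞ (1 − e^{−λx})·x^{−α−1}·ℓ(δ^{1/α}/x) dx ≥ (1/(4α))·λ^α·ℓ(λ·δ^{1/α}). (Consequently, a subordinator S with Laplace transform E[exp(−λS(1))] = exp(−δ·∫_1^∞ (1 − e^{−λx})·x^{−α−1}·ℓ(δ^{1/α}/x) dx) satisfies E[exp(−λS(1))] ≤ exp(−(1/(4α))·δ·λ^α·ℓ(λ·δ^{1/α})) uniformly in δ ∈ (0,1/2].) -/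

import Mathlib

open MeasureTheory ProbabilityTheory Filter Set

noncomputable section

/-- A path is cadlag on `[0,∞)`: right-continuous everywhere on `[0,∞)` and
with left limits at every `t > 0`. -/
def CadlagOn (f : ℝ → ℝ) : Prop :=
  (∀ t : ℝ, 0 ≤ t → Tendsto f (nhdsWithin t (Set.Ici t)) (nhds (f t))) ∧
  (∀ t : ℝ, 0 < t → ∃ l : ℝ, Tendsto f (nhdsWithin t (Set.Iio t)) (nhds l))

/-- `X` is a Lévy process under `P`. -/
def IsLevyProcess {Ω : Type*} [MeasurableSpace Ω] (P : Measure Ω) (X : ℝ → Ω → ℝ) : Prop :=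
  (∀ᵐ ω ∂P, X 0 ω = 0) ∧
  (∀ (n : ℕ) (t : Fin (n + 1) → ℝ), (∀ i, 0 ≤ t i) → Monotone t →
    iIndepFun
      (fun i : Fin n => fun ω => X (t i.succ) ω - X (t i.castSucc) ω) P) ∧
  (∀ s t : ℝ, 0 ≤ s → 0 ≤ t →
    Measure.map (fun ω => X (t + s) ω - X s ω) P = Measure.map (X t) P) ∧
  (∀ᵐ ω ∂P, CadlagOn (fun t => X t ω))

/-- `X` is a subordinator: a Lévy process with a.s. nondecreasing paths. -/
def IsSubordinator {Ω : Type*} [MeasurableSpace Ω] (P : Measure Ω) (X : ℝ → Ω → ℝ) : Prop :=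
  IsLevyProcess P X ∧ ∀ᵐ ω ∂P, ∀ s t : ℝ, 0 ≤ s → s ≤ t → X s ω ≤ X t ω

/-- `X` has Lévy triplet `(b, σ², ν)` under `P`. -/
def HasLevyTriplet {Ω : Type*} [MeasurableSpace Ω] (P : Measure Ω) (X : ℝ → Ω → ℝ)
    (b σ2 : ℝ) (ν : Measure ℝ) : Prop :=
  ν {0} = 0 ∧ (∫⁻ x : ℝ, ENNReal.ofReal (min 1 (x ^ 2)) ∂ν) < ⊤ ∧
  ∀ t : ℝ, 0 ≤ t → ∀ u : ℝ,
    (∫ ω, Complex.exp (Complex.I * u * X t ω) ∂P) =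
      Complex.exp ((t : ℂ) * (Complex.I * b * u - σ2 * u ^ 2 / 2 +
        ∫ x : ℝ, (Complex.exp (Complex.I * u * x) - 1 -
          (if |x| ≤ 1 then Complex.I * u * x else 0)) ∂ν))

/-- `ℓ` is slowly varying at `0`. -/
def SlowlyVaryingAtZero (ℓ : ℝ → ℝ) : Prop :=
  Measurable ℓ ∧ (∀ x : ℝ, 0 < x → 0 < ℓ x) ∧
  ∀ c : ℝ, 0 < c →
    Tendsto (fun x => ℓ (c * x) / ℓ x) (nhdsWithin 0 (Set.Ioi 0)) (nhds 1)

/-- `X` belongs to the domain of attraction `D(α, ρ)` of a strictly `α`-stable law,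
with norming function `c`. -/
def InDomainOfAttraction {Ω : Type*} [MeasurableSpace Ω] (P : Measure Ω) (X : ℝ → Ω → ℝ)
    (α ρ : ℝ) (c : ℝ → ℝ) : Prop :=
  (∀ t : ℝ, 0 < t → 0 < c t) ∧
  ∃ κ : ℝ, 0 < κ ∧ ∃ θ : ℝ, θ ∈ Set.Ioo (-1 : ℝ) 1 ∧ ρ = (1 + θ) / 2 ∧
    ∀ u : ℝ,
      Tendsto (fun t => ∫ ω, Complex.exp (Complex.I * u * (X t ω / c t)) ∂P) atTop
        (nhds (Complex.exp (-((|u| ^ α : ℝ) : ℂ) * (κ : ℂ) *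
          Complex.exp (-Complex.I * (Real.pi * α / 2) * θ * Real.sign u))))

/-- `δ(T) = min((ln ln T)⁻¹, 1/2)`. -/
def deltaFn (T : ℝ) : ℝ := min (Real.log (Real.log T))⁻¹ (1 / 2)

/-- Scaling a lintegral over an `Ioc`. -/
lemma lintegral_Ioc_scale {c a b : ℝ} (hc : 0 < c) {g : ℝ → ENNReal} (hg : Measurable g) :
    ENNReal.ofReal c * ∫⁻ t in Set.Ioc a b, g (c * t) = ∫⁻ x in Set.Ioc (c * a) (c * b), g x := by
  have hF : Measurable ((Set.Ioc (c * a) (c * b)).indicator g) :=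
    hg.indicator measurableSet_Ioc
  have hmem : ∀ t : ℝ, (Set.Ioc a b).indicator (fun t => g (c * t)) t
      = (Set.Ioc (c * a) (c * b)).indicator g (c * t) := by
    intro t
    simp only [Set.indicator_apply, Set.mem_Ioc, mul_lt_mul_iff_right₀ hc, mul_le_mul_iff_right₀ hc]
  calc ENNReal.ofReal c * ∫⁻ t in Set.Ioc a b, g (c * t)
      = ENNReal.ofReal c * ∫⁻ t, (Set.Ioc (c * a) (c * b)).indicator g (c * t) := by
        rw [← lintegral_indicator measurableSet_Ioc]
        simp_rw [hmem]
    _ = ENNReal.ofReal c * ∫⁻ x, (Set.Ioc (c * a) (c * b)).indicator g x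
          ∂(Measure.map (c * ·) volume) := by
        rw [lintegral_map hF (measurable_const_mul c)]
    _ = ENNReal.ofReal c * (ENNReal.ofReal |c⁻¹| *
          ∫⁻ x, (Set.Ioc (c * a) (c * b)).indicator g x) := by
        rw [Real.map_volume_mul_left (ne_of_gt hc), lintegral_smul_measure, smul_eq_mul]
    _ = ∫⁻ x in Set.Ioc (c * a) (c * b), g x := by
        rw [← mul_assoc, ← ENNReal.ofReal_mul hc.le, abs_of_pos (inv_pos.2 hc),
          mul_inv_cancel₀ (ne_of_gt hc), ENNReal.ofReal_one, one_mul,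
          lintegral_indicator measurableSet_Ioc]

lemma karamata_eventually (α : ℝ) (hα : α ∈ Set.Ioo (0 : ℝ) 1)
    (ℓ : ℝ → ℝ) (hℓ : SlowlyVaryingAtZero ℓ) :
    ∀ᶠ y in nhdsWithin 0 (Set.Ioi 0),
      ENNReal.ofReal (ℓ y * (1 / (2 * α))) ≤
        ∫⁻ t in Set.Ioc 1 ((8 : ℝ) ^ (1 / α)),
          ENNReal.ofReal (t ^ (-α - 1) * ℓ (y / t)) := by
  obtain ⟨hα0, hα1⟩ := hα
  set K : ℝ := (8 : ℝ) ^ (1 / α) with hKdef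
  have hK1 : 1 < K :=
    (Real.one_lt_rpow_iff_of_pos (by norm_num)).2 (Or.inl ⟨by norm_num, by positivity⟩)
  have hmα : Measurable fun t : ℝ => t ^ (-α - 1) := by measurability
  have hmℓ : ∀ y : ℝ, Measurable fun t : ℝ => ℓ (y / t) := fun y =>
    hℓ.1.comp (measurable_const.div measurable_id)
  have h0K : (0 : ℝ) ∉ Set.uIcc (1 : ℝ) K :=
    Set.notMem_uIcc_of_lt (by norm_num) (by linarith)
  -- value of the limiting integral
  have hKint : IntegrableOn (fun t : ℝ => t ^ (-α - 1)) (Set.Ioc 1 K) := by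
    have : IntervalIntegrable (fun t : ℝ => t ^ (-α - 1)) volume 1 K :=
      intervalIntegral.intervalIntegrable_rpow (Or.inr h0K)
    exact (intervalIntegrable_iff_integrableOn_Ioc_of_le hK1.le).1 this
  have hlim_int : (∫⁻ t in Set.Ioc 1 K, ENNReal.ofReal (t ^ (-α - 1)))
      = ENNReal.ofReal (7 / 8 / α) := by
    rw [← ofReal_integral_eq_lintegral_ofReal hKint ?_]
    · congr 1
      rw [← intervalIntegral.integral_of_le hK1.le,
        integral_rpow (Or.inr ⟨fun h => absurd (by linarith : α = (0:ℝ)) hα0.ne', h0K⟩)]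
      have he : -α - 1 + 1 = -α := by ring
      have hKpow : K ^ (-α - 1 + 1) = 8⁻¹ := by
        rw [he, hKdef, ← Real.rpow_mul (by norm_num : (0:ℝ) ≤ 8),
          show 1 / α * -α = -1 by field_simp, Real.rpow_neg_one]
      rw [hKpow, he, Real.one_rpow]
      field_simp
      ring
    · filter_upwards [ae_restrict_mem measurableSet_Ioc] with t ht
      exact Real.rpow_nonneg (by linarith [ht.1] : (0:ℝ) ≤ t) _
  -- the eventual bound, by contradiction via Fatou
  by_contra hcon
  rw [Filter.not_eventually] at hcon
  have hfreq : ∃ᶠ y in nhdsWithin 0 (Set.Ioi 0),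
      (0 < y ∧ ¬ ENNReal.ofReal (ℓ y * (1 / (2 * α))) ≤
        ∫⁻ t in Set.Ioc 1 K, ENNReal.ofReal (t ^ (-α - 1) * ℓ (y / t))) := by
    refine (hcon.and_eventually ?_).mono fun y hy => ⟨hy.2, hy.1⟩
    exact eventually_mem_nhdsWithin
  obtain ⟨u, hu, hup⟩ := Filter.exists_seq_forall_of_frequently hfreq
  -- normalized integrals
  set G : ℕ → ENNReal := fun n => ∫⁻ t in Set.Ioc 1 K,
    ENNReal.ofReal (t ^ (-α - 1) * (ℓ (u n / t) / ℓ (u n))) with hGdef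
  have hu0 : ∀ n, 0 < u n := fun n => (hup n).1
  have hmG : ∀ n, Measurable fun t : ℝ =>
      ENNReal.ofReal (t ^ (-α - 1) * (ℓ (u n / t) / ℓ (u n))) := fun n =>
    (hmα.mul ((hmℓ (u n)).div measurable_const)).ennreal_ofReal
  have hGlt : ∀ n, G n < ENNReal.ofReal (1 / (2 * α)) := by
    intro n
    have hl := hℓ.2.1 (u n) (hu0 n)
    have hsplit : (∫⁻ t in Set.Ioc 1 K, ENNReal.ofReal (t ^ (-α - 1) * ℓ (u n / t)))
        = ENNReal.ofReal (ℓ (u n)) * G n := by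
      rw [hGdef, ← lintegral_const_mul _ (hmG n)]
      refine lintegral_congr fun t => ?_
      rw [← ENNReal.ofReal_mul hl.le]
      congr 1
      field_simp
    have hlt := lt_of_not_ge (hup n).2
    rw [hsplit, ENNReal.ofReal_mul hl.le] at hlt
    exact (ENNReal.mul_lt_mul_iff_right (by simpa using ENNReal.ofReal_pos.2 hl)
      ENNReal.ofReal_ne_top).1 hlt
  -- Fatou
  have hpt : ∀ t ∈ Set.Ioc (1:ℝ) K,
      Filter.liminf (fun n => ENNReal.ofReal (t ^ (-α - 1) * (ℓ (u n / t) / ℓ (u n)))) Filter.atTop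
        = ENNReal.ofReal (t ^ (-α - 1)) := by
    intro t ht
    have ht0 : (0:ℝ) < t := lt_trans one_pos ht.1
    have h1 : Filter.Tendsto (fun n => ℓ (t⁻¹ * u n) / ℓ (u n)) Filter.atTop (nhds 1) :=
      (hℓ.2.2 t⁻¹ (inv_pos.2 ht0)).comp hu
    have h2 : Filter.Tendsto
        (fun n => ENNReal.ofReal (t ^ (-α - 1) * (ℓ (u n / t) / ℓ (u n)))) Filter.atTop
        (nhds (ENNReal.ofReal (t ^ (-α - 1) * 1))) := by
      apply (ENNReal.continuous_ofReal.tendsto _).comp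
      simp_rw [div_eq_inv_mul (u _) t]
      exact tendsto_const_nhds.mul h1
    rw [mul_one] at h2
    exact h2.liminf_eq
  have hfatou : ENNReal.ofReal (7 / 8 / α) ≤ ENNReal.ofReal (1 / (2 * α)) := by
    calc ENNReal.ofReal (7 / 8 / α)
        = ∫⁻ t in Set.Ioc 1 K, ENNReal.ofReal (t ^ (-α - 1)) := hlim_int.symm
      _ = ∫⁻ t in Set.Ioc 1 K, Filter.liminf
            (fun n => ENNReal.ofReal (t ^ (-α - 1) * (ℓ (u n / t) / ℓ (u n)))) Filter.atTop := by
          refine setLIntegral_congr_fun measurableSet_Ioc (fun t ht => ?_)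
          exact (hpt t ht).symm
      _ ≤ Filter.liminf G Filter.atTop := lintegral_liminf_le hmG
      _ ≤ ENNReal.ofReal (1 / (2 * α)) :=
          liminf_le_of_frequently_le' (Filter.Frequently.of_forall fun n => (hGlt n).le)
  have : (7 : ℝ) / 8 / α ≤ 1 / (2 * α) :=
    (ENNReal.ofReal_le_ofReal_iff (by positivity)).1 hfatou
  rw [div_le_div_iff₀ (by positivity) (by positivity)] at this
  nlinarith


/-- **Karamata-type estimate.** For `ℓ` slowly varying at `0` there is `λ₀ ∈ (0,1)` such that
for all `λ ∈ (0,λ₀)` and `δ ∈ (0,1/2]`,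
`∫_1^∞ (1 - e^{-λx}) x^{-α-1} ℓ(δ^{1/α}/x) dx ≥ (1/(4α)) λ^α ℓ(λ δ^{1/α})`
(as an inequality of extended nonnegative reals, so that the value `+∞` is allowed). -/
theorem karamata_laplace_lower_bound
    (α : ℝ) (hα : α ∈ Set.Ioo (0 : ℝ) 1)
    (ℓ : ℝ → ℝ) (hℓ : SlowlyVaryingAtZero ℓ) :
    ∃ lam0 : ℝ, lam0 ∈ Set.Ioo (0 : ℝ) 1 ∧
      ∀ lam : ℝ, lam ∈ Set.Ioo 0 lam0 → ∀ δ : ℝ, δ ∈ Set.Ioc (0 : ℝ) (1 / 2) →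
        ENNReal.ofReal (1 / (4 * α) * lam ^ α * ℓ (lam * δ ^ (1 / α))) ≤
          ∫⁻ x in Set.Ioi (1 : ℝ),
            ENNReal.ofReal ((1 - Real.exp (-lam * x)) * (x ^ (-α - 1) * ℓ (δ ^ (1 / α) / x))) := by
  obtain ⟨hα0, hα1⟩ := hα
  set K : ℝ := (8 : ℝ) ^ (1 / α) with hKdef
  have hK1 : 1 < K :=
    (Real.one_lt_rpow_iff_of_pos (by norm_num)).2 (Or.inl ⟨by norm_num, by positivity⟩)
  have hmα : Measurable fun t : ℝ => t ^ (-α - 1) := by measurability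
  have hev := karamata_eventually α ⟨hα0, hα1⟩ ℓ hℓ
  rw [Filter.eventually_iff] at hev
  obtain ⟨y₀, hy₀, hsubI⟩ := mem_nhdsGT_iff_exists_Ioo_subset.1 hev
  refine ⟨min y₀ (1 / 2), ⟨lt_min hy₀ (by norm_num),
    lt_of_le_of_lt (min_le_right _ _) (by norm_num)⟩, ?_⟩
  intro lam hlam δ hδ
  obtain ⟨hl0, hl1⟩ := hlam
  obtain ⟨hδ0, hδ2⟩ := hδ
  have hlhalf : lam < 1 / 2 := lt_of_lt_of_le hl1 (min_le_right _ _)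
  have hly0 : lam < y₀ := lt_of_lt_of_le hl1 (min_le_left _ _)
  set d : ℝ := δ ^ (1 / α) with hd
  have hd0 : 0 < d := Real.rpow_pos_of_pos hδ0 _
  have hd1 : d ≤ 1 := Real.rpow_le_one hδ0.le (by linarith) (by positivity)
  set y : ℝ := lam * d with hy
  have hy0 : 0 < y := mul_pos hl0 hd0
  have hyy0 : y < y₀ := lt_of_le_of_lt (by nlinarith : y ≤ lam) hly0
  have hA : ENNReal.ofReal (ℓ y * (1 / (2 * α))) ≤
      ∫⁻ t in Set.Ioc 1 K, ENNReal.ofReal (t ^ (-α - 1) * ℓ (y / t)) := hsubI ⟨hy0, hyy0⟩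
  have hly := hℓ.2.1 y hy0
  set E : ℝ := Real.exp (-1) with hE
  have h2e : (2 : ℝ) ≤ Real.exp 1 := by nlinarith [Real.add_one_le_exp 1]
  have hexp : E ≤ 1 / 2 := by
    rw [hE, Real.exp_neg]
    rw [inv_le_comm₀ (Real.exp_pos 1) (by norm_num)]
    norm_num
    linarith
  have hE0 : 0 < 1 - E := by
    have : (0:ℝ) < Real.exp (-1) := Real.exp_pos _
    linarith
  have hpow : lam ^ (α + 1) = lam ^ α * lam := by rw [Real.rpow_add hl0, Real.rpow_one]
  have hrp : 0 < lam ^ α := Real.rpow_pos_of_pos hl0 _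
  have hinvpow : (lam⁻¹) ^ (-α - 1) = lam ^ (α + 1) := by
    rw [← Real.rpow_neg_one lam, ← Real.rpow_mul hl0.le]
    congr 1
    ring
  -- measurability of the full integrand
  have hmld : Measurable fun x : ℝ => ℓ (d / x) := hℓ.1.comp (measurable_const.div measurable_id)
  have hme : Measurable fun x : ℝ => 1 - Real.exp (-lam * x) :=
    (Real.measurable_exp.comp (measurable_id.const_mul (-lam))).const_sub 1
  set g : ℝ → ENNReal := fun x =>
    ENNReal.ofReal ((1 - Real.exp (-lam * x)) * (x ^ (-α - 1) * ℓ (d / x))) with hgdef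
  have hg : Measurable g := (hme.mul (hmα.mul hmld)).ennreal_ofReal
  have hmyt : Measurable fun t : ℝ => ENNReal.ofReal (t ^ (-α - 1) * ℓ (y / t)) :=
    (hmα.mul (hℓ.1.comp (measurable_const.div measurable_id))).ennreal_ofReal
  have hsubset : Set.Ioc (lam⁻¹ * 1) (lam⁻¹ * K) ⊆ Set.Ioi (1 : ℝ) := by
    intro x hx
    have h2 : (1 : ℝ) < lam⁻¹ := by
      nlinarith [mul_inv_cancel₀ hl0.ne', inv_pos.2 hl0]
    have := hx.1
    rw [mul_one] at this
    exact lt_trans h2 this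
  calc ENNReal.ofReal (1 / (4 * α) * lam ^ α * ℓ y)
      ≤ ENNReal.ofReal (lam⁻¹ * (((1 - E) * lam ^ (α + 1)) * (ℓ y * (1 / (2 * α))))) := by
        apply ENNReal.ofReal_le_ofReal
        have key : lam⁻¹ * (((1 - E) * lam ^ (α + 1)) * (ℓ y * (1 / (2 * α))))
            = (1 - E) * (lam ^ α * (ℓ y * (1 / (2 * α)))) := by
          rw [hpow]
          field_simp
        rw [key]
        calc 1 / (4 * α) * lam ^ α * ℓ y
            = (1 / 2) * (lam ^ α * (ℓ y * (1 / (2 * α)))) := by field_simp; ring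
          _ ≤ (1 - E) * (lam ^ α * (ℓ y * (1 / (2 * α)))) := by
              apply mul_le_mul_of_nonneg_right (by linarith)
              positivity
    _ = ENNReal.ofReal lam⁻¹ * (ENNReal.ofReal ((1 - E) * lam ^ (α + 1)) *
          ENNReal.ofReal (ℓ y * (1 / (2 * α)))) := by
        rw [ENNReal.ofReal_mul (by positivity), ENNReal.ofReal_mul (by positivity)]
    _ ≤ ENNReal.ofReal lam⁻¹ * (ENNReal.ofReal ((1 - E) * lam ^ (α + 1)) *
          ∫⁻ t in Set.Ioc 1 K, ENNReal.ofReal (t ^ (-α - 1) * ℓ (y / t))) :=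
        mul_le_mul_right (mul_le_mul_right hA _) _
    _ = ENNReal.ofReal lam⁻¹ * ∫⁻ t in Set.Ioc 1 K,
          ENNReal.ofReal ((1 - E) * (lam ^ (α + 1) * (t ^ (-α - 1) * ℓ (y / t)))) := by
        rw [← lintegral_const_mul _ hmyt]
        congr 1
        refine lintegral_congr fun t => ?_
        rw [← ENNReal.ofReal_mul (by positivity)]
        congr 1
        ring
    _ ≤ ENNReal.ofReal lam⁻¹ * ∫⁻ t in Set.Ioc 1 K, g (lam⁻¹ * t) := by
        apply mul_le_mul_right
        refine setLIntegral_mono (hg.comp (measurable_const_mul lam⁻¹)) fun t ht => ?_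
        have ht0 : (0 : ℝ) < t := lt_trans one_pos ht.1
        have h1 : -lam * (lam⁻¹ * t) = -t := by field_simp
        have h2 : (lam⁻¹ * t) ^ (-α - 1) = lam ^ (α + 1) * t ^ (-α - 1) := by
          rw [Real.mul_rpow (inv_nonneg.2 hl0.le) ht0.le, hinvpow]
        have h3 : d / (lam⁻¹ * t) = y / t := by
          rw [hy]
          field_simp
        show _ ≤ ENNReal.ofReal ((1 - Real.exp (-lam * (lam⁻¹ * t))) *
          ((lam⁻¹ * t) ^ (-α - 1) * ℓ (d / (lam⁻¹ * t))))
        rw [h1, h2, h3, mul_assoc]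
        apply ENNReal.ofReal_le_ofReal
        apply mul_le_mul_of_nonneg_right
        · have : Real.exp (-t) ≤ E := by
            rw [hE]
            exact Real.exp_le_exp.2 (by linarith [ht.1])
          linarith
        · have : 0 ≤ ℓ (y / t) := (hℓ.2.1 _ (div_pos hy0 ht0)).le
          positivity
    _ = ∫⁻ x in Set.Ioc (lam⁻¹ * 1) (lam⁻¹ * K), g x := lintegral_Ioc_scale (inv_pos.2 hl0) hg
    _ ≤ ∫⁻ x in Set.Ioi (1 : ℝ), g x := lintegral_mono_set hsubset


end
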